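/- (ZF) If (P, ≺) is a complete, dense, nonseparable linear order without endpoints satisfying the countable chain condition, and (P, ≺) admits a well-ordered separating family, then there exists a Suslin tree on ω₁. -/

import Mathlib

/-- The ordinals below `ω₁`, the underlying set of trees on `ω₁`. -/
def Omega1 : Type 1 := {o : Ordinal // o < (Cardinal.aleph 1).ord}

noncomputable instance : LinearOrder Omega1 := Subtype.instLinearOrder _

/-- A Suslin tree on `ω₁`: a tree order on the set of countable ordinals
(with level function `lvl` recording the order type of the predecessors),
of height `ω₁`, with countable levels, no uncountable chain and no
uncountable antichain. -/
def IsSuslinTree (prec : Omega1 → Omega1 → Prop) (lvl : Omega1 → Ordinal) : Prop :=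
  (∀ t, ¬ prec t t) ∧
  (∀ s t u, prec s t → prec t u → prec s u) ∧
  (∀ t s s', prec s t → prec s' t → s = s' ∨ prec s s' ∨ prec s' s) ∧
  (∀ s t, prec s t → lvl s < lvl t) ∧
  (∀ t β, β < lvl t → ∃ s, prec s t ∧ lvl s = β) ∧
  (∀ α : Ordinal, {t : Omega1 | lvl t = α}.Countable) ∧
  (∀ α : Ordinal, α < (Cardinal.aleph 1).ord → ∃ t, lvl t = α) ∧
  (∀ t, lvl t < (Cardinal.aleph 1).ord) ∧
  (∀ C : Set Omega1, (∀ x ∈ C, ∀ y ∈ C, x = y ∨ prec x y ∨ prec y x) → C.Countable) ∧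
  (∀ A : Set Omega1,
    (∀ x ∈ A, ∀ y ∈ A, x ≠ y → ¬ prec x y ∧ ¬ prec y x) → A.Countable)

namespace SuslinAux

theorem omega1_wf : WellFounded ((· < ·) : Omega1 → Omega1 → Prop) :=
  InvImage.wf (fun t : Omega1 => t.val) Ordinal.lt_wf

theorem countable_of_injOn_image {α : Type*} {β : Type*} {s : Set α} {f : α → β}
    (hinj : Set.InjOn f s) (h : (f '' s).Countable) : s.Countable := by
  obtain ⟨g, hg⟩ := Set.countable_iff_exists_injOn.1 h
  exact Set.countable_iff_exists_injOn.2
    ⟨g ∘ f, fun x hx y hy hxy =>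
      hinj hx hy (hg (Set.mem_image_of_mem f hx) (Set.mem_image_of_mem f hy) hxy)⟩

theorem omega1_seg_countable (t : Omega1) : {s : Omega1 | s < t}.Countable := by
  have h1 : (Set.Iio t.val).Countable := by
    rw [Cardinal.countable_iff_lt_aleph_one, Ordinal.mk_Iio_ordinal,
      Cardinal.lift_lt_aleph_one, ← Cardinal.lt_ord]
    exact t.2
  exact h1.preimage (Subtype.val_injective
    (p := fun o : Ordinal => o < (Cardinal.aleph 1).ord))

theorem omega1_uncountable : ¬ (Set.univ : Set Omega1).Countable := by
  intro h
  rw [Cardinal.countable_iff_lt_aleph_one, Cardinal.mk_univ] at h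
  have h3 : Cardinal.mk Omega1 = Cardinal.lift.{1,0} (Cardinal.aleph 1) := by
    have h4 := Ordinal.mk_Iio_ordinal (Cardinal.aleph 1).ord
    rw [Cardinal.card_ord] at h4
    exact h4
  rw [h3, Cardinal.lift_lt_aleph_one] at h
  exact absurd h (lt_irrefl _)

section Tree

universe v

variable {P : Type*} [LinearOrder P] (a b : Omega1 → P)

/-- The tree order. -/
def Prec (s t : Omega1) : Prop := s < t ∧ a s < a t ∧ b t < b s

/-- The level function, by well-founded recursion. -/
noncomputable def lvlF : Omega1 → Ordinal.{v} :=
  omega1_wf.fix (fun t ih => sSup {o : Ordinal | ∃ s, ∃ h : Prec a b s t, o = ih s h.1 + 1})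

theorem lvlF_eq (t : Omega1) :
    lvlF.{v} a b t = sSup {o : Ordinal.{v} | ∃ s, ∃ _h : Prec a b s t, o = lvlF.{v} a b s + 1} := by
  rw [lvlF, WellFounded.fix_eq]

theorem lvlF_le (t : Omega1) : lvlF.{v} a b t ≤ Ordinal.lift.{v} t.val := by
  induction t using omega1_wf.induction with
  | _ t IH =>
    rw [lvlF_eq]
    refine csSup_le' ?_
    rintro o ⟨s, hs, rfl⟩
    have h1 : lvlF a b s ≤ Ordinal.lift.{v} s.val := IH s hs.1
    have h2 : s.val < t.val := hs.1
    calc lvlF a b s + 1 ≤ Ordinal.lift.{v} s.val + 1 := add_le_add_left h1 1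
      _ = Ordinal.lift.{v} (s.val + 1) := by rw [Ordinal.lift_add, Ordinal.lift_one]
      _ ≤ Ordinal.lift.{v} t.val := by
          rw [Ordinal.lift_le, Ordinal.add_one_eq_succ]
          exact Order.succ_le_of_lt h2
  
theorem lvlF_bddAbove (t : Omega1) :
    BddAbove {o : Ordinal.{v} | ∃ _s : Omega1, ∃ _h : Prec a b _s t, o = lvlF.{v} a b _s + 1} := by
  refine ⟨Ordinal.lift.{v} t.val, ?_⟩
  rintro o ⟨s, hs, rfl⟩
  calc lvlF a b s + 1 ≤ Ordinal.lift.{v} s.val + 1 := add_le_add_left (lvlF_le a b s) 1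
    _ = Ordinal.lift.{v} (s.val + 1) := by rw [Ordinal.lift_add, Ordinal.lift_one]
    _ ≤ Ordinal.lift.{v} t.val := by
        rw [Ordinal.lift_le, Ordinal.add_one_eq_succ]
        exact Order.succ_le_of_lt hs.1

theorem lvlF_lt_of_prec {s t : Omega1} (h : Prec a b s t) : lvlF.{v} a b s < lvlF.{v} a b t := by
  have hmem : lvlF.{v} a b s + 1 ∈
      {o : Ordinal.{v} | ∃ _s : Omega1, ∃ _h : Prec a b _s t, o = lvlF.{v} a b _s + 1} :=
    ⟨s, h, rfl⟩
  have := le_csSup (lvlF_bddAbove a b t) hmem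
  rw [← lvlF_eq] at this
  calc lvlF a b s < lvlF a b s + 1 := by
        rw [Ordinal.add_one_eq_succ]; exact Order.lt_succ _
    _ ≤ lvlF a b t := this

theorem lvlF_pred_exists (htrans : ∀ s t u, Prec a b s t → Prec a b t u → Prec a b s u)
    (t : Omega1) : ∀ β : Ordinal.{v}, β < lvlF.{v} a b t → ∃ s, Prec a b s t ∧ lvlF.{v} a b s = β := by
  induction t using omega1_wf.induction with
  | _ t IH =>
    intro β hβ
    rw [lvlF_eq] at hβ
    have : ∃ o ∈ {o : Ordinal.{v} | ∃ _s : Omega1, ∃ _h : Prec a b _s t, o = lvlF.{v} a b _s + 1},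
        β < o := by
      by_contra hcon
      push_neg at hcon
      exact absurd (csSup_le' fun o ho => hcon o ho) (not_le.2 hβ)
    obtain ⟨o, ⟨s, hs, rfl⟩, hlt⟩ := this
    have hβs : β ≤ lvlF a b s := by
      rw [Ordinal.add_one_eq_succ, Order.lt_succ_iff] at hlt
      exact hlt
    rcases eq_or_lt_of_le hβs with he | hl
    · exact ⟨s, hs, he.symm⟩
    · obtain ⟨s', hs', he'⟩ := IH s hs.1 β hl
      exact ⟨s', htrans s' s t hs' hs, he'⟩

end Tree

end SuslinAux

/-- ZF: If `(P, ≺)` is a complete, dense, nonseparable linear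
order without endpoints satisfying the countable chain condition, and `(P, ≺)`
admits a well-ordered separating family, then there is a Suslin tree on `ω₁`. -/
theorem suslin_tree_of_wellordered_separating_family
    {P : Type*} [LinearOrder P] [Nonempty P] [NoMaxOrder P] [NoMinOrder P]
    -- completeness: every nonempty bounded subset has a supremum and an infimum
    (hsup : ∀ S : Set P, S.Nonempty → BddAbove S → ∃ u, IsLUB S u)
    (hinf : ∀ S : Set P, S.Nonempty → BddBelow S → ∃ u, IsGLB S u)
    -- density
    (hdense : ∀ a b : P, a < b → ∃ c, a < c ∧ c < b)
    -- nonseparability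
    (hnonsep : ¬ ∃ D : Set P, D.Countable ∧
      ∀ a b : P, a < b → (Set.Ioo a b).Nonempty → ∃ d ∈ D, d ∈ Set.Ioo a b)
    -- countable chain condition
    (hccc : ∀ F : Set (Set P),
      (∀ I ∈ F, ∃ a b : P, a < b ∧ I = Set.Ioo a b ∧ I.Nonempty) →
      F.Pairwise Disjoint → F.Countable)
    -- a well-ordered separating family ⟨A i : i ∈ ι⟩
    {ι : Type*} [LinearOrder ι] [WellFoundedLT ι] (A : ι → Set P)
    (hdc : ∀ i, ∀ x y : P, x ≤ y → y ∈ A i → x ∈ A i)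
    (hsep : ∀ x y : P, x < y → ∃ i, x ∈ A i ∧ y ∉ A i) :
    ∃ (prec : Omega1 → Omega1 → Prop) (lvl : Omega1 → Ordinal),
      IsSuslinTree prec lvl := by
  classical
  clear hsup hinf hdc hsep A
  open SuslinAux in
  -- Step 1: from nonseparability, avoid any countable set by a closed interval.
  have step : ∀ E : Set P, E.Countable →
      ∃ p : P × P, p.1 < p.2 ∧ ∀ x ∈ E, x ∉ Set.Icc p.1 p.2 := by
    intro E hE
    push_neg at hnonsep
    obtain ⟨u, v, huv, _hne, hd⟩ := hnonsep E hE
    obtain ⟨c, hc1, hc2⟩ := hdense u v huv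
    obtain ⟨u', hu1, hu2⟩ := hdense u c hc1
    obtain ⟨v', hv1, hv2⟩ := hdense c v hc2
    refine ⟨(u', v'), lt_trans hu2 hv1, fun x hx hxI => hd x hx ?_⟩
    exact ⟨lt_of_lt_of_le hu1 hxI.1, lt_of_le_of_lt hxI.2 hv2⟩
  -- Step 2: recursively choose the intervals.
  have ex : ∀ (t : Omega1) (ih : ∀ s : Omega1, s < t → P × P),
      ∃ p : P × P, p.1 < p.2 ∧ ∀ s (h : s < t),
        (ih s h).1 ∉ Set.Icc p.1 p.2 ∧ (ih s h).2 ∉ Set.Icc p.1 p.2 := by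
    intro t ih
    have hc : Countable {s : Omega1 // s < t} := (omega1_seg_countable t).to_subtype
    have hE : ((Set.range fun s : {s : Omega1 // s < t} => (ih s.1 s.2).1) ∪
        (Set.range fun s : {s : Omega1 // s < t} => (ih s.1 s.2).2)).Countable :=
      (Set.countable_range _).union (Set.countable_range _)
    obtain ⟨p, hp, hpe⟩ := step _ hE
    exact ⟨p, hp, fun s h =>
      ⟨hpe _ (Or.inl ⟨⟨s, h⟩, rfl⟩), hpe _ (Or.inr ⟨⟨s, h⟩, rfl⟩)⟩⟩
  obtain ⟨g, hg⟩ : ∃ g : Omega1 → P × P, ∀ t : Omega1,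
      (g t).1 < (g t).2 ∧ ∀ s, s < t →
        (g s).1 ∉ Set.Icc (g t).1 (g t).2 ∧ (g s).2 ∉ Set.Icc (g t).1 (g t).2 := by
    refine ⟨omega1_wf.fix (fun t ih => Classical.choose (ex t ih)), fun t => ?_⟩
    have h1 : omega1_wf.fix (fun t ih => Classical.choose (ex t ih)) t =
        Classical.choose (ex t (fun s _ =>
          omega1_wf.fix (fun t ih => Classical.choose (ex t ih)) s)) :=
      omega1_wf.fix_eq _ t
    obtain ⟨h2, h3⟩ := Classical.choose_spec (ex t (fun s _ =>
      omega1_wf.fix (fun t ih => Classical.choose (ex t ih)) s))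
    rw [h1]
    exact ⟨h2, fun s hs => h3 s hs⟩
  set a : Omega1 → P := fun t => (g t).1 with ha
  set b : Omega1 → P := fun t => (g t).2 with hb
  have hlt : ∀ t, a t < b t := fun t => (hg t).1
  have havoid : ∀ s t : Omega1, s < t →
      a s ∉ Set.Icc (a t) (b t) ∧ b s ∉ Set.Icc (a t) (b t) :=
    fun s t h => (hg t).2 s h
  have hOne : ∀ t, (Set.Ioo (a t) (b t)).Nonempty := by
    intro t
    obtain ⟨c, h1, h2⟩ := hdense _ _ (hlt t)
    exact ⟨c, h1, h2⟩
  -- Key geometric lemma.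
  have L1 : ∀ s t : Omega1, s < t →
      (Set.Ioo (a s) (b s) ∩ Set.Ioo (a t) (b t)).Nonempty → SuslinAux.Prec a b s t := by
    rintro s t hst ⟨x, hx1, hx2⟩
    obtain ⟨h1, h2⟩ := havoid s t hst
    refine ⟨hst, ?_, ?_⟩
    · by_contra h
      push_neg at h
      exact h1 ⟨h, le_of_lt (lt_trans hx1.1 hx2.2)⟩
    · by_contra h
      push_neg at h
      exact h2 ⟨le_of_lt (lt_trans hx2.1 hx1.2), h⟩
  have hsub : ∀ s t : Omega1, SuslinAux.Prec a b s t →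
      Set.Ioo (a t) (b t) ⊆ Set.Ioo (a s) (b s) :=
    fun s t h x hx => ⟨lt_trans h.2.1 hx.1, lt_trans hx.2 h.2.2⟩
  have htrans : ∀ s t u, SuslinAux.Prec a b s t → SuslinAux.Prec a b t u →
      SuslinAux.Prec a b s u :=
    fun s t u h1 h2 => ⟨lt_trans h1.1 h2.1, lt_trans h1.2.1 h2.2.1, lt_trans h2.2.2 h1.2.2⟩
  have hcompat : ∀ s s' t : Omega1, SuslinAux.Prec a b s t → SuslinAux.Prec a b s' t →
      s = s' ∨ SuslinAux.Prec a b s s' ∨ SuslinAux.Prec a b s' s := by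
    intro s s' t h h'
    obtain ⟨x, hx⟩ := hOne t
    rcases lt_trichotomy s s' with hc | hc | hc
    · exact Or.inr (Or.inl (L1 s s' hc ⟨x, hsub s t h hx, hsub s' t h' hx⟩))
    · exact Or.inl hc
    · exact Or.inr (Or.inr (L1 s' s hc ⟨x, hsub s' t h' hx, hsub s t h hx⟩))
  -- antichains are countable
  have hanti : ∀ A : Set Omega1,
      (∀ x ∈ A, ∀ y ∈ A, x ≠ y → ¬ SuslinAux.Prec a b x y ∧ ¬ SuslinAux.Prec a b y x) →
      A.Countable := by
    intro A hA
    set φ : Omega1 → Set P := fun s => Set.Ioo (a s) (b s) with hφ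
    have hdisj : ∀ x ∈ A, ∀ y ∈ A, x ≠ y → Disjoint (φ x) (φ y) := by
      intro x hx y hy hne
      rw [Set.disjoint_iff_inter_eq_empty]
      by_contra hcon
      obtain ⟨z, hz⟩ := Set.nonempty_iff_ne_empty.2 hcon
      rcases lt_trichotomy x y with hc | hc | hc
      · exact (hA x hx y hy hne).1 (L1 x y hc ⟨z, hz.1, hz.2⟩)
      · exact hne hc
      · exact (hA x hx y hy hne).2 (L1 y x hc ⟨z, hz.2, hz.1⟩)
    have hinj : Set.InjOn φ A := by
      intro x hx y hy hxy
      by_contra hne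
      obtain ⟨z, hz⟩ := hOne x
      have := hdisj x hx y hy hne
      rw [Set.disjoint_iff_inter_eq_empty, hxy, Set.inter_self] at this
      rw [hφ] at this
      exact absurd this (Set.nonempty_iff_ne_empty.1 (hOne y))
    refine SuslinAux.countable_of_injOn_image hinj (hccc _ ?_ ?_)
    · rintro I ⟨s, _, rfl⟩
      exact ⟨a s, b s, hlt s, rfl, hOne s⟩
    · rintro I ⟨s, hs, rfl⟩ J ⟨t, ht, rfl⟩ hne
      exact hdisj s hs t ht (fun h => hne (by rw [h]))
  -- levels are countable
  have hlevel : ∀ α : Ordinal, {t : Omega1 | SuslinAux.lvlF a b t = α}.Countable := by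
    intro α
    refine hanti _ ?_
    intro x hx y hy hne
    constructor
    · intro h
      have := SuslinAux.lvlF_lt_of_prec a b h
      rw [hx, hy] at this
      exact lt_irrefl _ this
    · intro h
      have := SuslinAux.lvlF_lt_of_prec a b h
      rw [hx, hy] at this
      exact lt_irrefl _ this
  refine ⟨SuslinAux.Prec a b, SuslinAux.lvlF a b,
    ?_, htrans, fun t s s' h h' => hcompat s s' t h h', ?_, ?_, hlevel, ?_, ?_, ?_, hanti⟩
  -- irreflexivity
  · exact fun t h => lt_irrefl t h.1
  -- strict monotonicity of levels
  · exact fun s t h => SuslinAux.lvlF_lt_of_prec a b h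
  -- predecessors at every level
  · exact fun t β hβ => SuslinAux.lvlF_pred_exists a b htrans t β hβ
  -- all levels below ω₁ attained
  · intro α hα
    have hbig : ∃ t : Omega1, α ≤ SuslinAux.lvlF a b t := by
      by_contra hcon
      push_neg at hcon
      have hcover : (Set.univ : Set Omega1) ⊆
          ⋃ β ∈ Set.Iio α, {t : Omega1 | SuslinAux.lvlF a b t = β} := by
        intro t _
        exact Set.mem_biUnion (hcon t) rfl
      have hIio : (Set.Iio α).Countable := by
        rw [Cardinal.countable_iff_lt_aleph_one, Ordinal.mk_Iio_ordinal,
          Cardinal.lift_lt_aleph_one, ← Cardinal.lt_ord]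
        exact hα
      exact SuslinAux.omega1_uncountable
        (Set.Countable.mono hcover (hIio.biUnion fun β _ => hlevel β))
    obtain ⟨t, ht⟩ := hbig
    rcases eq_or_lt_of_le ht with he | hl
    · exact ⟨t, he.symm⟩
    · obtain ⟨s, _, hs⟩ := SuslinAux.lvlF_pred_exists a b htrans t α hl
      exact ⟨s, hs⟩
  -- levels below ω₁
  · intro t
    have h1 : Ordinal.lift t.val < Ordinal.lift ((Cardinal.aleph 1).ord) :=
      Ordinal.lift_lt.2 t.2
    rw [Cardinal.lift_ord, Cardinal.lift_aleph, Ordinal.lift_one] at h1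
    exact lt_of_le_of_lt (SuslinAux.lvlF_le a b t) h1
  -- chains are countable
  · intro C hC
    by_cases hCe : C.Nonempty
    swap
    · rw [Set.not_nonempty_iff_eq_empty] at hCe
      rw [hCe]; exact Set.countable_empty
    set C' : Set Omega1 := {s | s ∈ C ∧ ∃ u ∈ C, s < u} with hC'
    have hprecC : ∀ s ∈ C, ∀ u ∈ C, s < u → SuslinAux.Prec a b s u := by
      intro s hs u hu hlt'
      rcases hC s hs u hu with he | hp | hp
      · exact absurd he (ne_of_lt hlt')
      · exact hp
      · exact absurd hp.1 (not_lt_of_gt hlt')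
    have hne : ∀ s ∈ C', {u : Omega1 | u ∈ C ∧ s < u}.Nonempty := fun s hs => hs.2
    set nxt : Omega1 → Omega1 := fun s =>
      if h : {u : Omega1 | u ∈ C ∧ s < u}.Nonempty then
        SuslinAux.omega1_wf.min {u : Omega1 | u ∈ C ∧ s < u} h
      else s with hnxt
    have hnxt_mem : ∀ s ∈ C', nxt s ∈ C ∧ s < nxt s := by
      intro s hs
      rw [hnxt]
      simp only [hne s hs, dif_pos]
      exact SuslinAux.omega1_wf.min_mem _ (hne s hs)
    have hnxt_min : ∀ s ∈ C', ∀ u ∈ C, s < u → nxt s ≤ u := by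
      intro s hs u hu hlt'
      rw [hnxt]
      simp only [hne s hs, dif_pos]
      exact not_lt.1 (SuslinAux.omega1_wf.not_lt_min {u : Omega1 | u ∈ C ∧ s < u} (x := u) ⟨hu, hlt'⟩)
    have ha_lt : ∀ s ∈ C', a s < a (nxt s) := by
      intro s hs
      exact (hprecC s hs.1 (nxt s) (hnxt_mem s hs).1 (hnxt_mem s hs).2).2.1
    have ha_mono : ∀ s ∈ C', ∀ s' ∈ C', s < s' → a (nxt s) ≤ a s' := by
      intro s hs s' hs' hlt'
      rcases eq_or_lt_of_le (hnxt_min s hs s' hs'.1 hlt') with he | hl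
      · rw [he]
      · exact le_of_lt (hprecC (nxt s) (hnxt_mem s hs).1 s' hs'.1 hl).2.1
    set ψ : Omega1 → Set P := fun s => Set.Ioo (a s) (a (nxt s)) with hψ
    have hψne : ∀ s ∈ C', (ψ s).Nonempty := by
      intro s hs
      obtain ⟨c, h1, h2⟩ := hdense _ _ (ha_lt s hs)
      exact ⟨c, h1, h2⟩
    have hψdisj : ∀ s ∈ C', ∀ s' ∈ C', s ≠ s' → Disjoint (ψ s) (ψ s') := by
      have key : ∀ s ∈ C', ∀ s' ∈ C', s < s' → Disjoint (ψ s) (ψ s') := by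
        intro s hs s' hs' hlt'
        rw [Set.disjoint_iff_inter_eq_empty]
        ext z
        simp only [Set.mem_inter_iff, Set.mem_empty_iff_false, iff_false, not_and]
        intro hz1 hz2
        exact absurd (lt_of_lt_of_le hz1.2 (ha_mono s hs s' hs' hlt')) (not_lt_of_gt hz2.1)
      intro s hs s' hs' hne'
      rcases lt_or_gt_of_ne hne' with h | h
      · exact key s hs s' hs' h
      · exact (key s' hs' s hs h).symm
    have hinj : Set.InjOn ψ C' := by
      intro x hx y hy hxy
      by_contra hne'
      have := hψdisj x hx y hy hne'
      rw [Set.disjoint_iff_inter_eq_empty, hxy, Set.inter_self] at this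
      exact absurd this (Set.nonempty_iff_ne_empty.1 (hψne y hy))
    have hC'c : C'.Countable := by
      refine SuslinAux.countable_of_injOn_image hinj (hccc _ ?_ ?_)
      · rintro I ⟨s, hs, rfl⟩
        exact ⟨a s, a (nxt s), ha_lt s hs, rfl, hψne s hs⟩
      · rintro I ⟨s, hs, rfl⟩ J ⟨t, ht, rfl⟩ hne'
        exact hψdisj s hs t ht (fun h => hne' (by rw [h]))
    have hsub2 : C ⊆ C' ∪ (C \ C') := fun x hx => by
      by_cases h : x ∈ C'
      · exact Or.inl h
      · exact Or.inr ⟨hx, h⟩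
    have hsing : (C \ C').Subsingleton := by
      intro x hx y hy
      by_contra hne'
      rcases lt_or_gt_of_ne hne' with h | h
      · exact hx.2 ⟨hx.1, y, hy.1, h⟩
      · exact hy.2 ⟨hy.1, x, hx.1, h⟩
    exact Set.Countable.mono hsub2 (hC'c.union hsing.countable)
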